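/- (Bias bound.) Let γ, γ_Bw be discount factors with 0 ≤ γ ≤ γ_Bw < 1, let π*_γ be an optimal policy for discount γ and π*_{Bw} an optimal policy for discount γ_Bw. Let δ = δ(π*_γ, π*_{Bw}) be their discordant action variation and let κ = κ_γ be the value-function variation at discount γ. Then ||V_{γ_Bw}^{π*_{Bw}} − V_{γ_Bw}^{π*_γ}||_∞ ≤ (δ/2) · κ · (γ_Bw − γ) / ((1 − γ_Bw)(1 − γ_Bw(1 − δ/2))). -/

import Mathlib

open Finset

noncomputable section

/-- Transition matrix of a policy `π` in an MDP with transition function `P`. -/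
def polMatrix {S A : Type*} [Fintype S] [DecidableEq S] (P : S → A → S → ℝ) (π : S → A) :
    Matrix S S ℝ :=
  fun s s' => P s (π s) s'

/-- Reward vector of a policy `π` for a reward function `R`. -/
def polReward {S A : Type*} (R : S → A → ℝ) (π : S → A) : S → ℝ :=
  fun s => R s (π s)

/-- Value vector of a policy: `V_γ^π = Σ_{k=0}^∞ γ^k P_π^k R_π`. -/
def valueVec {S A : Type*} [Fintype S] [DecidableEq S] (P : S → A → S → ℝ) (R : S → A → ℝ)
    (γ : ℝ) (π : S → A) : S → ℝ :=
  ∑' k : ℕ, γ ^ k • ((polMatrix P π ^ k).mulVec (polReward R π))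

/-- A policy `π⋆` is optimal for discount `γ` if it dominates every policy in every state. -/
def IsOptimalPolicy {S A : Type*} [Fintype S] [DecidableEq S] (P : S → A → S → ℝ)
    (R : S → A → ℝ) (γ : ℝ) (πstar : S → A) : Prop :=
  ∀ (π : S → A) (s : S), valueVec P R γ π s ≤ valueVec P R γ πstar s

/-- Discordant action variation of two policies:
`max_{s : π s ≠ π' s} ‖P(·|s, π s) − P(·|s, π' s)‖₁`, taken to be `0` when `π = π'`. -/
def discordantVar {S A : Type*} [Fintype S] [DecidableEq S] [DecidableEq A]
    (P : S → A → S → ℝ) (π π' : S → A) : ℝ :=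
  Finset.fold max 0 (fun s => ∑ s', |P s (π s) s' - P s (π' s) s'|)
    (Finset.univ.filter fun s => π s ≠ π' s)

/-- Value-function variation of a policy: `max_{s,s'} |V(s) − V(s')|`. -/
def valueVariation {S : Type*} [Fintype S] [Nonempty S] (V : S → ℝ) : ℝ :=
  (Finset.univ : Finset (S × S)).sup' Finset.univ_nonempty (fun pr => |V pr.1 - V pr.2|)

/-- Sup norm of a vector on a nonempty finite set. -/
def supNorm {S : Type*} [Fintype S] [Nonempty S] (x : S → ℝ) : ℝ :=
  Finset.univ.sup' Finset.univ_nonempty (fun s => |x s|)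


set_option linter.unusedSectionVars false
namespace BiasBoundAux

variable {S : Type*} [Fintype S] [DecidableEq S]

lemma pow_entry_nonneg (M : Matrix S S ℝ) (h0 : ∀ i j, 0 ≤ M i j) :
    ∀ (k : ℕ) (i j : S), 0 ≤ (M ^ k) i j := by
  intro k
  induction k with
  | zero =>
      intro i j
      rw [pow_zero]
      by_cases h : i = j <;> simp [Matrix.one_apply, h]
  | succ n ih =>
      intro i j
      rw [pow_succ, Matrix.mul_apply]
      exact Finset.sum_nonneg fun t _ => mul_nonneg (ih i t) (h0 t j)

lemma pow_row_sum (M : Matrix S S ℝ) (h1 : ∀ i, ∑ j, M i j = 1) :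
    ∀ (k : ℕ) (i : S), ∑ j, (M ^ k) i j = 1 := by
  intro k
  induction k with
  | zero => intro i; simp [Matrix.one_apply]
  | succ n ih =>
      intro i
      simp only [pow_succ, Matrix.mul_apply]
      rw [Finset.sum_comm]
      have : ∀ t ∈ (univ : Finset S), ∑ j, (M ^ n) i t * M t j = (M ^ n) i t := by
        intro t _
        rw [← Finset.mul_sum, h1 t, mul_one]
      rw [Finset.sum_congr rfl this]
      exact ih i

lemma mulVec_apply' (M : Matrix S S ℝ) (x : S → ℝ) (s : S) :
    M.mulVec x s = ∑ t, M s t * x t := rfl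

lemma mulVec_le_of_le (M : Matrix S S ℝ) (h0 : ∀ i j, 0 ≤ M i j) (h1 : ∀ i, ∑ j, M i j = 1)
    {x : S → ℝ} {c : ℝ} (hx : ∀ t, x t ≤ c) (s : S) : M.mulVec x s ≤ c := by
  rw [mulVec_apply']
  calc ∑ t, M s t * x t ≤ ∑ t, M s t * c :=
        Finset.sum_le_sum fun t _ => mul_le_mul_of_nonneg_left (hx t) (h0 s t)
    _ = c := by rw [← Finset.sum_mul, h1 s, one_mul]

lemma le_mulVec_of_le (M : Matrix S S ℝ) (h0 : ∀ i j, 0 ≤ M i j) (h1 : ∀ i, ∑ j, M i j = 1)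
    {x : S → ℝ} {c : ℝ} (hx : ∀ t, c ≤ x t) (s : S) : c ≤ M.mulVec x s := by
  rw [mulVec_apply']
  calc (c : ℝ) = ∑ t, M s t * c := by rw [← Finset.sum_mul, h1 s, one_mul]
    _ ≤ ∑ t, M s t * x t :=
        Finset.sum_le_sum fun t _ => mul_le_mul_of_nonneg_left (hx t) (h0 s t)

lemma abs_mulVec_le (M : Matrix S S ℝ) (h0 : ∀ i j, 0 ≤ M i j) (h1 : ∀ i, ∑ j, M i j = 1)
    {x : S → ℝ} {c : ℝ} (hx : ∀ t, |x t| ≤ c) (s : S) : |M.mulVec x s| ≤ c := by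
  rw [abs_le]
  constructor
  · exact le_mulVec_of_le M h0 h1 (fun t => neg_le_of_abs_le (hx t)) s
  · exact mulVec_le_of_le M h0 h1 (fun t => le_of_abs_le (hx t)) s

lemma mulVec_nonneg (M : Matrix S S ℝ) (h0 : ∀ i j, 0 ≤ M i j) {x : S → ℝ}
    (hx : ∀ t, 0 ≤ x t) (s : S) : 0 ≤ M.mulVec x s := by
  rw [mulVec_apply']
  exact Finset.sum_nonneg fun t _ => mul_nonneg (h0 s t) (hx t)

variable [Nonempty S]

lemma summable_geom (M : Matrix S S ℝ) (h0 : ∀ i j, 0 ≤ M i j) (h1 : ∀ i, ∑ j, M i j = 1)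
    (r : S → ℝ) {γ : ℝ} (hγ0 : 0 ≤ γ) (hγ1 : γ < 1) (s : S) :
    Summable (fun k : ℕ => γ ^ k * ((M ^ k).mulVec r s)) := by
  obtain ⟨c, hc⟩ : ∃ c, ∀ t, |r t| ≤ c :=
    ⟨Finset.univ.sup' Finset.univ_nonempty (fun t => |r t|),
      fun t => Finset.le_sup' (fun t => |r t|) (Finset.mem_univ t)⟩
  apply Summable.of_abs
  apply Summable.of_nonneg_of_le (fun k => abs_nonneg _) (fun k => ?_)
    ((summable_geometric_of_lt_one hγ0 hγ1).mul_right c)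
  rw [abs_mul, abs_pow, abs_of_nonneg hγ0]
  exact mul_le_mul_of_nonneg_left
    (abs_mulVec_le _ (pow_entry_nonneg M h0 k) (pow_row_sum M h1 k) hc s) (pow_nonneg hγ0 k)



lemma bellman (M : Matrix S S ℝ) (h0 : ∀ i j, 0 ≤ M i j) (h1 : ∀ i, ∑ j, M i j = 1)
    (r : S → ℝ) {γ : ℝ} (hγ0 : 0 ≤ γ) (hγ1 : γ < 1) (s : S) :
    (∑' k : ℕ, γ ^ k * ((M ^ k).mulVec r s))
      = r s + γ * ∑ t, M s t * (∑' k : ℕ, γ ^ k * ((M ^ k).mulVec r t)) := by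
  have hs := summable_geom M h0 h1 r hγ0 hγ1 s
  rw [Summable.tsum_eq_zero_add hs]
  have h0term : γ ^ 0 * ((M ^ 0).mulVec r s) = r s := by
    simp [Matrix.one_mulVec]
  have hterm : ∀ k : ℕ, γ ^ (k + 1) * ((M ^ (k + 1)).mulVec r s)
      = ∑ t, γ * (M s t * (γ ^ k * ((M ^ k).mulVec r t))) := by
    intro k
    have e1 : (M ^ (k + 1)).mulVec r s = ∑ t, M s t * ((M ^ k).mulVec r t) := by
      rw [pow_succ']
      rw [← Matrix.mulVec_mulVec]
      rfl
    rw [e1, Finset.mul_sum]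
    exact Finset.sum_congr rfl fun t _ => by ring
  have hshift : (∑' k : ℕ, γ ^ (k + 1) * ((M ^ (k + 1)).mulVec r s))
      = γ * ∑ t, M s t * (∑' k : ℕ, γ ^ k * ((M ^ k).mulVec r t)) := by
    calc (∑' k : ℕ, γ ^ (k + 1) * ((M ^ (k + 1)).mulVec r s))
        = ∑' k : ℕ, ∑ t, γ * (M s t * (γ ^ k * ((M ^ k).mulVec r t))) := tsum_congr hterm
      _ = ∑ t, ∑' k : ℕ, γ * (M s t * (γ ^ k * ((M ^ k).mulVec r t))) := by
          refine Summable.tsum_finsetSum fun t _ => ?_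
          exact ((summable_geom M h0 h1 r hγ0 hγ1 t).mul_left (M s t)).mul_left γ
      _ = ∑ t, γ * (M s t * (∑' k : ℕ, γ ^ k * ((M ^ k).mulVec r t))) := by
          refine Finset.sum_congr rfl fun t _ => ?_
          rw [tsum_mul_left, tsum_mul_left]
      _ = γ * ∑ t, M s t * (∑' k : ℕ, γ ^ k * ((M ^ k).mulVec r t)) := by
          rw [Finset.mul_sum]
  rw [h0term, hshift]


set_option maxHeartbeats 1000000 in
lemma value_sub_eq (M : Matrix S S ℝ) (h0 : ∀ i j, 0 ≤ M i j) (h1 : ∀ i, ∑ j, M i j = 1)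
    (r v : S → ℝ) {γ : ℝ} (hγ0 : 0 ≤ γ) (hγ1 : γ < 1) (s : S) :
    (∑' k : ℕ, γ ^ k * ((M ^ k).mulVec (fun t => r t + γ * (M.mulVec v t) - v t) s))
      = (∑' k : ℕ, γ ^ k * ((M ^ k).mulVec r s)) - v s := by
  set w : S → ℝ := fun t => r t + γ * (M.mulVec v t) - v t with hw
  have hterm : ∀ k : ℕ, γ ^ k * ((M ^ k).mulVec w s)
      = (γ ^ k * ((M ^ k).mulVec r s) + γ ^ (k + 1) * ((M ^ (k + 1)).mulVec v s))
        - γ ^ k * ((M ^ k).mulVec v s) := by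
    intro k
    have hMk1 : (M ^ (k + 1)).mulVec v s = (M ^ k).mulVec (M.mulVec v) s := by
      rw [Matrix.mulVec_mulVec, ← pow_succ]
    have expand : (M ^ k).mulVec w s
        = (M ^ k).mulVec r s + γ * ((M ^ k).mulVec (M.mulVec v) s) - (M ^ k).mulVec v s := by
      simp only [mulVec_apply', hw]
      have e : ∀ t ∈ (univ : Finset S),
          (M ^ k) s t * (r t + γ * (∑ j, M t j * v j) - v t)
            = (M ^ k) s t * r t + γ * ((M ^ k) s t * (∑ j, M t j * v j)) - (M ^ k) s t * v t :=
        fun t _ => by ring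
      rw [Finset.sum_congr rfl e, Finset.sum_sub_distrib, Finset.sum_add_distrib,
        ← Finset.mul_sum]
    rw [expand, hMk1]; ring
  have hr := summable_geom M h0 h1 r hγ0 hγ1 s
  have hv := summable_geom M h0 h1 v hγ0 hγ1 s
  have hv1 : Summable (fun k : ℕ => γ ^ (k + 1) * ((M ^ (k + 1)).mulVec v s)) :=
    (summable_nat_add_iff 1).mpr hv
  have h00 : γ ^ 0 * ((M ^ 0).mulVec v s) = v s := by simp [Matrix.one_mulVec]
  have hshift : (∑' k : ℕ, γ ^ (k + 1) * ((M ^ (k + 1)).mulVec v s))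
      = (∑' k : ℕ, γ ^ k * ((M ^ k).mulVec v s)) - v s := by
    have h := Summable.tsum_eq_zero_add hv
    rw [h00] at h
    linarith
  calc (∑' k : ℕ, γ ^ k * ((M ^ k).mulVec w s))
      = ∑' k : ℕ, ((γ ^ k * ((M ^ k).mulVec r s) + γ ^ (k + 1) * ((M ^ (k + 1)).mulVec v s))
          - γ ^ k * ((M ^ k).mulVec v s)) := tsum_congr hterm
    _ = (∑' k : ℕ, (γ ^ k * ((M ^ k).mulVec r s) + γ ^ (k + 1) * ((M ^ (k + 1)).mulVec v s)))
          - ∑' k : ℕ, γ ^ k * ((M ^ k).mulVec v s) := Summable.tsum_sub (hr.add hv1) hv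
    _ = ((∑' k : ℕ, γ ^ k * ((M ^ k).mulVec r s))
          + ∑' k : ℕ, γ ^ (k + 1) * ((M ^ (k + 1)).mulVec v s))
          - ∑' k : ℕ, γ ^ k * ((M ^ k).mulVec v s) := by rw [Summable.tsum_add hr hv1]
    _ = (∑' k : ℕ, γ ^ k * ((M ^ k).mulVec r s)) - v s := by rw [hshift]; ring



variable {A : Type*}

lemma valueVec_apply (P : S → A → S → ℝ) (R : S → A → ℝ)
    (hP0 : ∀ s a s', 0 ≤ P s a s') (hP1 : ∀ s a, ∑ s', P s a s' = 1)
    {γ : ℝ} (hγ0 : 0 ≤ γ) (hγ1 : γ < 1) (π : S → A) (s : S) :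
    valueVec P R γ π s
      = ∑' k : ℕ, γ ^ k * (((polMatrix P π) ^ k).mulVec (polReward R π) s) := by
  have hsum : Summable (fun k : ℕ => γ ^ k • (((polMatrix P π) ^ k).mulVec (polReward R π))) := by
    refine Pi.summable.mpr fun t => ?_
    exact summable_geom (polMatrix P π) (fun i j => hP0 i (π i) j) (fun i => hP1 i (π i))
      (polReward R π) hγ0 hγ1 t
  rw [valueVec, tsum_apply hsum]
  exact tsum_congr fun k => by simp [smul_eq_mul]

lemma valueVec_bellman (P : S → A → S → ℝ) (R : S → A → ℝ)
    (hP0 : ∀ s a s', 0 ≤ P s a s') (hP1 : ∀ s a, ∑ s', P s a s' = 1)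
    {γ : ℝ} (hγ0 : 0 ≤ γ) (hγ1 : γ < 1) (π : S → A) (s : S) :
    valueVec P R γ π s = R s (π s) + γ * ∑ t, P s (π s) t * valueVec P R γ π t := by
  have h0 : ∀ i j, 0 ≤ polMatrix P π i j := fun i j => hP0 i (π i) j
  have h1 : ∀ i, ∑ j, polMatrix P π i j = 1 := fun i => hP1 i (π i)
  rw [valueVec_apply P R hP0 hP1 hγ0 hγ1 π s,
    bellman (polMatrix P π) h0 h1 (polReward R π) hγ0 hγ1 s]
  simp only [← valueVec_apply P R hP0 hP1 hγ0 hγ1 π]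
  rfl

lemma greedy_le (P : S → A → S → ℝ) (R : S → A → ℝ)
    (hP0 : ∀ s a s', 0 ≤ P s a s') (hP1 : ∀ s a, ∑ s', P s a s' = 1)
    {γ : ℝ} (hγ0 : 0 ≤ γ) (hγ1 : γ < 1) {π : S → A}
    (hopt : IsOptimalPolicy P R γ π) (s : S) (a : A) :
    R s a + γ * ∑ t, P s a t * valueVec P R γ π t ≤ valueVec P R γ π s := by
  by_contra hcon
  push_neg at hcon
  set ρ := Function.update π s a with hρ
  set M := polMatrix P ρ with hM
  have hM0 : ∀ i j, 0 ≤ M i j := fun i j => hP0 i (ρ i) j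
  have hM1 : ∀ i, ∑ j, M i j = 1 := fun i => hP1 i (ρ i)
  set v : S → ℝ := valueVec P R γ π with hv
  set w : S → ℝ := fun t => polReward R ρ t + γ * (M.mulVec v t) - v t with hw
  have hρs : ρ s = a := Function.update_self s a π
  have hws : v s < w s + v s := by
    have hMv : M.mulVec v s = ∑ t, P s a t * v t := by
      rw [mulVec_apply']
      refine Finset.sum_congr rfl fun t _ => ?_
      rw [hM]
      simp [polMatrix, hρs]
    have : w s = R s a + γ * ∑ t, P s a t * v t - v s := by
      rw [hw]
      simp only [polReward, hρs, hMv]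
    rw [this]
    linarith
  have hw0 : ∀ t, 0 ≤ w t := by
    intro t
    by_cases ht : t = s
    · subst ht
      linarith
    · have hρt : ρ t = π t := Function.update_of_ne ht _ _
      have hb := valueVec_bellman P R hP0 hP1 hγ0 hγ1 π t
      have hMv : M.mulVec v t = ∑ j, P t (π t) j * v j := by
        rw [mulVec_apply']
        refine Finset.sum_congr rfl fun j _ => ?_
        rw [hM]
        simp [polMatrix, hρt]
      have : w t = R t (π t) + γ * ∑ j, P t (π t) j * v j - v t := by
        rw [hw]
        simp only [polReward, hρt, hMv]
      rw [this, ← hb]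
      simp [hv]
  have hkey : valueVec P R γ ρ s - v s = ∑' k : ℕ, γ ^ k * ((M ^ k).mulVec w s) := by
    rw [valueVec_apply P R hP0 hP1 hγ0 hγ1 ρ s]
    rw [show (∑' k : ℕ, γ ^ k * ((M ^ k).mulVec w s))
        = (∑' k : ℕ, γ ^ k * ((M ^ k).mulVec (polReward R ρ) s)) - v s from
      value_sub_eq M hM0 hM1 (polReward R ρ) v hγ0 hγ1 s]
  have hterm0 : w s ≤ ∑' k : ℕ, γ ^ k * ((M ^ k).mulVec w s) := by
    have hsum := summable_geom M hM0 hM1 w hγ0 hγ1 s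
    have := Summable.le_tsum hsum 0 (fun j _ =>
      mul_nonneg (pow_nonneg hγ0 j) (mulVec_nonneg _ (pow_entry_nonneg M hM0 j) hw0 s))
    simpa [Matrix.one_mulVec] using this
  have hge := hopt ρ s
  have : valueVec P R γ ρ s - v s ≥ w s := by rw [hkey]; exact hterm0
  linarith

end BiasBoundAux

set_option maxHeartbeats 4000000 in
/-- **Bias bound.**
With `π⋆γ` optimal for discount `γ`, `π⋆Bw` optimal for discount `γBw`, `δ` their discordant
action variation, and `κ` the value-function variation at discount `γ`,
`‖V_{γBw}^{π⋆Bw} − V_{γBw}^{π⋆γ}‖_∞ ≤ (δ/2) κ (γBw − γ) / ((1 − γBw)(1 − γBw(1 − δ/2)))`. -/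
theorem bias_bound
    {S A : Type*} [Fintype S] [DecidableEq S] [Nonempty S] [Fintype A] [Nonempty A] [DecidableEq A]
    (P : S → A → S → ℝ) (R : S → A → ℝ) (Rmax : ℝ)
    (hP0 : ∀ s a s', 0 ≤ P s a s') (hP1 : ∀ s a, ∑ s', P s a s' = 1)
    (hRmax : 0 ≤ Rmax) (hR0 : ∀ s a, 0 ≤ R s a) (hR1 : ∀ s a, R s a ≤ Rmax)
    (γ γBw : ℝ) (hγ0 : 0 ≤ γ) (hγγBw : γ ≤ γBw) (hγBw1 : γBw < 1)
    (πγ πBw : S → A)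
    (hπγ : IsOptimalPolicy P R γ πγ) (hπBw : IsOptimalPolicy P R γBw πBw) :
    supNorm (fun s => valueVec P R γBw πBw s - valueVec P R γBw πγ s) ≤
      (discordantVar P πγ πBw / 2) * valueVariation (valueVec P R γ πγ) * (γBw - γ) /
        ((1 - γBw) * (1 - γBw * (1 - discordantVar P πγ πBw / 2))) := by
  classical
  have hγBw0 : (0:ℝ) ≤ γBw := le_trans hγ0 hγγBw
  have hγlt1 : γ < 1 := lt_of_le_of_lt hγγBw hγBw1
  have hγδ : (0:ℝ) ≤ γBw - γ := by linarith
  have he : (0:ℝ) < 1 - γBw := by linarith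
  set V : S → ℝ := valueVec P R γ πγ with hV
  set W : S → ℝ := valueVec P R γBw πγ with hW
  set W' : S → ℝ := valueVec P R γBw πBw with hW'
  set δ := discordantVar P πγ πBw with hδdef
  set κ := valueVariation V with hκdef
  have bellV : ∀ t, V t = R t (πγ t) + γ * ∑ j, P t (πγ t) j * V j := by
    intro t
    simp only [hV]
    exact BiasBoundAux.valueVec_bellman P R hP0 hP1 hγ0 hγlt1 πγ t
  have bellW : ∀ t, W t = R t (πγ t) + γBw * ∑ j, P t (πγ t) j * W j := by
    intro t
    simp only [hW]
    exact BiasBoundAux.valueVec_bellman P R hP0 hP1 hγBw0 hγBw1 πγ t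
  have bellW' : ∀ t, W' t = R t (πBw t) + γBw * ∑ j, P t (πBw t) j * W' j := by
    intro t
    simp only [hW']
    exact BiasBoundAux.valueVec_bellman P R hP0 hP1 hγBw0 hγBw1 πBw t
  have greedyγ : ∀ t a, R t a + γ * ∑ j, P t a j * V j ≤ V t := by
    intro t a
    simp only [hV]
    exact BiasBoundAux.greedy_le P R hP0 hP1 hγ0 hγlt1 hπγ t a
  have hΔ0 : ∀ t, 0 ≤ W' t - W t := by
    intro t
    have h := hπBw πγ t
    rw [hW, hW']
    linarith
  obtain ⟨sM, -, hsM⟩ := Finset.exists_max_image (univ : Finset S) (fun t => W' t - W t)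
    univ_nonempty
  obtain ⟨sY, -, hsY⟩ := Finset.exists_max_image (univ : Finset S) (fun t => W' t - V t)
    univ_nonempty
  obtain ⟨sZ, -, hsZ⟩ := Finset.exists_min_image (univ : Finset S) (fun t => W t - V t)
    univ_nonempty
  obtain ⟨sV, -, hsV⟩ := Finset.exists_max_image (univ : Finset S) V univ_nonempty
  obtain ⟨sv, -, hsv⟩ := Finset.exists_min_image (univ : Finset S) V univ_nonempty
  have hsM' : ∀ j, W' j - W j ≤ W' sM - W sM := fun j => hsM j (Finset.mem_univ j)
  have hsY' : ∀ j, W' j - V j ≤ W' sY - V sY := fun j => hsY j (Finset.mem_univ j)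
  have hsZ' : ∀ j, W sZ - V sZ ≤ W j - V j := fun j => hsZ j (Finset.mem_univ j)
  have hsV' : ∀ j, V j ≤ V sV := fun j => hsV j (Finset.mem_univ j)
  have hsv' : ∀ j, V sv ≤ V j := fun j => hsv j (Finset.mem_univ j)
  -- bound for the max of Y = W' - V
  have hB1 : (1 - γBw) * (W' sY - V sY) ≤ (γBw - γ) * V sV := by
    have h1 := bellW' sY
    have h2 := greedyγ sY (πBw sY)
    have hcomb : γBw * (∑ j, P sY (πBw sY) j * W' j) - γ * (∑ j, P sY (πBw sY) j * V j)
        = ∑ j, P sY (πBw sY) j * (γBw * W' j - γ * V j) := by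
      rw [Finset.mul_sum, Finset.mul_sum, ← Finset.sum_sub_distrib]
      exact Finset.sum_congr rfl fun j _ => by ring
    have h3 : ∑ j, P sY (πBw sY) j * (γBw * W' j - γ * V j)
        ≤ γBw * (W' sY - V sY) + (γBw - γ) * V sV := by
      calc ∑ j, P sY (πBw sY) j * (γBw * W' j - γ * V j)
          ≤ ∑ j, P sY (πBw sY) j * (γBw * (W' sY - V sY) + (γBw - γ) * V sV) := by
            refine Finset.sum_le_sum fun j _ => mul_le_mul_of_nonneg_left ?_ (hP0 _ _ _)
            nlinarith [mul_le_mul_of_nonneg_left (hsY' j) hγBw0,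
              mul_le_mul_of_nonneg_left (hsV' j) hγδ]
        _ = γBw * (W' sY - V sY) + (γBw - γ) * V sV := by
            rw [← Finset.sum_mul, hP1 sY (πBw sY), one_mul]
    nlinarith [h1, h2, h3, hcomb]
  -- bound for the min of Z = W - V
  have hB2 : (γBw - γ) * V sv ≤ (1 - γBw) * (W sZ - V sZ) := by
    have h1 := bellW sZ
    have h2 := bellV sZ
    have hcomb : γBw * (∑ j, P sZ (πγ sZ) j * W j) - γ * (∑ j, P sZ (πγ sZ) j * V j)
        = ∑ j, P sZ (πγ sZ) j * (γBw * W j - γ * V j) := by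
      rw [Finset.mul_sum, Finset.mul_sum, ← Finset.sum_sub_distrib]
      exact Finset.sum_congr rfl fun j _ => by ring
    have h3 : γBw * (W sZ - V sZ) + (γBw - γ) * V sv
        ≤ ∑ j, P sZ (πγ sZ) j * (γBw * W j - γ * V j) := by
      calc γBw * (W sZ - V sZ) + (γBw - γ) * V sv
          = ∑ j, P sZ (πγ sZ) j * (γBw * (W sZ - V sZ) + (γBw - γ) * V sv) := by
            rw [← Finset.sum_mul, hP1 sZ (πγ sZ), one_mul]
        _ ≤ ∑ j, P sZ (πγ sZ) j * (γBw * W j - γ * V j) := by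
            refine Finset.sum_le_sum fun j _ => mul_le_mul_of_nonneg_left ?_ (hP0 _ _ _)
            nlinarith [mul_le_mul_of_nonneg_left (hsZ' j) hγBw0,
              mul_le_mul_of_nonneg_left (hsv' j) hγδ]
    nlinarith [h1, h2, h3, hcomb]
  -- overlap decomposition at the maximizing state sM
  obtain ⟨m, hm⟩ : ∃ m : S → ℝ, ∀ j, m j = min (P sM (πBw sM) j) (P sM (πγ sM) j) :=
    ⟨_, fun j => rfl⟩
  set d := ∑ j, |P sM (πγ sM) j - P sM (πBw sM) j| with hd
  have hm0 : ∀ j, 0 ≤ m j := fun j => by rw [hm]; exact le_min (hP0 _ _ _) (hP0 _ _ _)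
  have hmp : ∀ j, m j ≤ P sM (πBw sM) j := fun j => by rw [hm]; exact min_le_left _ _
  have hmq : ∀ j, m j ≤ P sM (πγ sM) j := fun j => by rw [hm]; exact min_le_right _ _
  have habs : ∀ j ∈ (univ : Finset S), |P sM (πγ sM) j - P sM (πBw sM) j|
      = P sM (πBw sM) j + P sM (πγ sM) j - 2 * m j := by
    intro j _
    rcases le_total (P sM (πBw sM) j) (P sM (πγ sM) j) with h | h
    · rw [abs_of_nonneg (by linarith), hm, min_eq_left h]; ring
    · rw [abs_of_nonpos (by linarith), hm, min_eq_right h]; ring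
  have hmass : ∑ j, m j = 1 - d / 2 := by
    have h : d = 2 - 2 * ∑ j, m j := by
      rw [hd, Finset.sum_congr rfl habs, Finset.sum_sub_distrib, Finset.sum_add_distrib,
        ← Finset.mul_sum, hP1, hP1]
      ring
    linarith
  have hpm : ∑ j, (P sM (πBw sM) j - m j) = d / 2 := by
    rw [Finset.sum_sub_distrib, hP1, hmass]; ring
  have hqm : ∑ j, (P sM (πγ sM) j - m j) = d / 2 := by
    rw [Finset.sum_sub_distrib, hP1, hmass]; ring
  have hd0 : 0 ≤ d := by rw [hd]; exact Finset.sum_nonneg fun j _ => abs_nonneg _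
  have hδ0 : 0 ≤ δ := by
    rw [hδdef]
    exact (Finset.le_fold_max 0).mpr (Or.inl le_rfl)
  have hdδ : d ≤ δ := by
    by_cases hact : πγ sM = πBw sM
    · have hzero : d = 0 := by
        rw [hd]
        refine Finset.sum_eq_zero fun j _ => ?_
        rw [hact, sub_self, abs_zero]
      rw [hzero]; exact hδ0
    · rw [hδdef]
      exact (Finset.le_fold_max d).mpr (Or.inr ⟨sM, by simp [hact], le_of_eq hd⟩)
  -- the main one-step inequality at sM
  have h1 := bellW' sM
  have h2 := bellW sM
  have h3 := greedyγ sM (πBw sM)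
  have h4 := bellV sM
  have hstep1 : W' sM - W sM
      ≤ (γBw * ∑ j, P sM (πBw sM) j * W' j - γ * ∑ j, P sM (πBw sM) j * V j)
        - (γBw * ∑ j, P sM (πγ sM) j * W j - γ * ∑ j, P sM (πγ sM) j * V j) := by
    linarith [h1, h2, h3, h4]
  have hcombp : γBw * (∑ j, P sM (πBw sM) j * W' j) - γ * (∑ j, P sM (πBw sM) j * V j)
      = ∑ j, P sM (πBw sM) j * (γBw * W' j - γ * V j) := by
    rw [Finset.mul_sum, Finset.mul_sum, ← Finset.sum_sub_distrib]
    exact Finset.sum_congr rfl fun j _ => by ring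
  have hcombq : γBw * (∑ j, P sM (πγ sM) j * W j) - γ * (∑ j, P sM (πγ sM) j * V j)
      = ∑ j, P sM (πγ sM) j * (γBw * W j - γ * V j) := by
    rw [Finset.mul_sum, Finset.mul_sum, ← Finset.sum_sub_distrib]
    exact Finset.sum_congr rfl fun j _ => by ring
  have hsplitp : ∑ j, P sM (πBw sM) j * (γBw * W' j - γ * V j)
      = ∑ j, m j * (γBw * W' j - γ * V j)
        + ∑ j, (P sM (πBw sM) j - m j) * (γBw * W' j - γ * V j) := by
    rw [← Finset.sum_add_distrib]
    exact Finset.sum_congr rfl fun j _ => by ring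
  have hsplitq : ∑ j, P sM (πγ sM) j * (γBw * W j - γ * V j)
      = ∑ j, m j * (γBw * W j - γ * V j)
        + ∑ j, (P sM (πγ sM) j - m j) * (γBw * W j - γ * V j) := by
    rw [← Finset.sum_add_distrib]
    exact Finset.sum_congr rfl fun j _ => by ring
  have t1 : ∑ j, m j * (γBw * W' j - γ * V j) - ∑ j, m j * (γBw * W j - γ * V j)
      ≤ (1 - d / 2) * (γBw * (W' sM - W sM)) := by
    rw [← hmass, Finset.sum_mul, ← Finset.sum_sub_distrib]
    refine Finset.sum_le_sum fun j _ => ?_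
    nlinarith [mul_le_mul_of_nonneg_left
      (mul_le_mul_of_nonneg_left (hsM' j) hγBw0) (hm0 j)]
  have t2 : ∑ j, (P sM (πBw sM) j - m j) * (γBw * W' j - γ * V j)
      ≤ d / 2 * (γBw * (W' sY - V sY) + (γBw - γ) * V sV) := by
    rw [← hpm, Finset.sum_mul]
    refine Finset.sum_le_sum fun j _ => ?_
    have hj : 0 ≤ P sM (πBw sM) j - m j := sub_nonneg.2 (hmp j)
    have hY : γBw * W' j - γ * V j ≤ γBw * (W' sY - V sY) + (γBw - γ) * V sV := by
      nlinarith [mul_le_mul_of_nonneg_left (hsY' j) hγBw0,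
        mul_le_mul_of_nonneg_left (hsV' j) hγδ]
    exact mul_le_mul_of_nonneg_left hY hj
  have t3 : d / 2 * (γBw * (W sZ - V sZ) + (γBw - γ) * V sv)
      ≤ ∑ j, (P sM (πγ sM) j - m j) * (γBw * W j - γ * V j) := by
    rw [← hqm, Finset.sum_mul]
    refine Finset.sum_le_sum fun j _ => ?_
    have hj : 0 ≤ P sM (πγ sM) j - m j := sub_nonneg.2 (hmq j)
    have hZ : γBw * (W sZ - V sZ) + (γBw - γ) * V sv ≤ γBw * W j - γ * V j := by
      nlinarith [mul_le_mul_of_nonneg_left (hsZ' j) hγBw0,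
        mul_le_mul_of_nonneg_left (hsv' j) hγδ]
    exact mul_le_mul_of_nonneg_left hZ hj
  have hmain : W' sM - W sM ≤ (1 - d / 2) * (γBw * (W' sM - W sM))
      + d / 2 * (γBw * (W' sY - V sY) + (γBw - γ) * V sV)
      - d / 2 * (γBw * (W sZ - V sZ) + (γBw - γ) * V sv) := by
    linarith [hstep1, hcombp, hcombq, hsplitp, hsplitq, t1, t2, t3]
  -- variation bounds
  have hκ' : V sV - V sv ≤ κ := by
    have h := Finset.le_sup' (fun pr : S × S => |V pr.1 - V pr.2|) (Finset.mem_univ (sV, sv))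
    rw [hκdef]
    calc V sV - V sv ≤ |V sV - V sv| := le_abs_self _
      _ ≤ _ := h
  have hκ'0 : 0 ≤ V sV - V sv := sub_nonneg.2 (hsv' sV)
  have hκ0 : 0 ≤ κ := le_trans hκ'0 hκ'
  obtain ⟨c, hcdef⟩ : ∃ c : ℝ, c = (γBw * (W' sY - V sY) + (γBw - γ) * V sV)
      - (γBw * (W sZ - V sZ) + (γBw - γ) * V sv) := ⟨_, rfl⟩
  have hc : (1 - γBw) * c ≤ (γBw - γ) * κ := by
    rw [hcdef]
    have hA : (1 - γBw) * (W' sY - V sY) - (1 - γBw) * (W sZ - V sZ)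
        ≤ (γBw - γ) * V sV - (γBw - γ) * V sv := by linarith [hB1, hB2]
    nlinarith [mul_le_mul_of_nonneg_left hA hγBw0, mul_le_mul_of_nonneg_left hκ' hγδ]
  have key1 : (W' sM - W sM) * (1 - γBw) ≤ d / 2 * (c - γBw * (W' sM - W sM)) := by
    rw [hcdef]
    nlinarith [hmain]
  have hden2 : 0 < 1 - γBw * (1 - δ / 2) := by nlinarith [mul_nonneg hγBw0 hδ0]
  have hden : 0 < (1 - γBw) * (1 - γBw * (1 - δ / 2)) := mul_pos he hden2
  have hRHS0 : 0 ≤ δ / 2 * κ * (γBw - γ) / ((1 - γBw) * (1 - γBw * (1 - δ / 2))) :=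
    div_nonneg (mul_nonneg (mul_nonneg (by linarith) hκ0) hγδ) hden.le
  have hufin : W' sM - W sM
      ≤ δ / 2 * κ * (γBw - γ) / ((1 - γBw) * (1 - γBw * (1 - δ / 2))) := by
    rcases le_or_gt c (γBw * (W' sM - W sM)) with hcu | hcu
    · have hdc : d / 2 * (c - γBw * (W' sM - W sM)) ≤ 0 := by
        nlinarith [mul_nonneg hd0 (sub_nonneg.2 hcu)]
      have hu1 : (W' sM - W sM) * (1 - γBw) ≤ 0 := le_trans key1 hdc
      have hu2 : W' sM - W sM ≤ 0 := by nlinarith [hu1, he]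
      linarith [hRHS0, hu2]
    · have key2 : (W' sM - W sM) * (1 - γBw) ≤ δ / 2 * (c - γBw * (W' sM - W sM)) := by
        have h5 : 0 ≤ (δ - d) * (c - γBw * (W' sM - W sM)) :=
          mul_nonneg (by linarith) (by linarith)
        nlinarith [key1, h5]
      have key3 : (W' sM - W sM) * ((1 - γBw) * (1 - γBw * (1 - δ / 2)))
          ≤ δ / 2 * κ * (γBw - γ) := by
        nlinarith [mul_le_mul_of_nonneg_left key2 he.le,
          mul_le_mul_of_nonneg_left hc (by linarith : (0:ℝ) ≤ δ / 2)]
      rw [le_div_iff₀ hden]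
      exact key3
  refine Finset.sup'_le _ _ fun s _ => ?_
  calc |W' s - W s| = W' s - W s := abs_of_nonneg (hΔ0 s)
    _ ≤ W' sM - W sM := hsM' s
    _ ≤ _ := hufin
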